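/- arXiv:1205.1185 — 4 statements merged into one kernel-verified Lean document; each statement's English description precedes it below -/
import Mathlib

section
/- Let c, d ∈ ℝ with d < 0 and c + d < 0. Then there exists a constant A > 0 (depending only on c and d) such that for every real B > 1, the sum ∑_{j=1}^{∞} 2^{cj}·min(1, B·2^{dj}) converges and satisfies ∑_{j=1}^{∞} 2^{cj}·min(1, B·2^{dj}) ≤ A·(1 + (log B)·B^{−c/d}). (Lemma 5.1(1).) -/
set_option maxHeartbeats 1000000

/-- `2 ^ (a * (j+1)) = (2^a)^(j+1)` as real powers. -/
lemma pow_succ_eq_aux (a : ℝ) (j : ℕ) :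
    (2 : ℝ) ^ (a * ((j : ℝ) + 1)) = ((2 : ℝ) ^ a) ^ (j + 1) := by
  rw [Real.rpow_mul (by norm_num : (0:ℝ) ≤ 2),
    ← Real.rpow_natCast ((2:ℝ) ^ a) (j + 1)]
  push_cast
  ring_nf

/-- Geometric series shifted by one. -/
lemma tsum_geom_succ_aux (r : ℝ) (h0 : 0 ≤ r) (h1 : r < 1) :
    ∑' j : ℕ, r ^ (j + 1) = r * (1 - r)⁻¹ := by
  have : (fun j : ℕ => r ^ (j + 1)) = fun j : ℕ => r * r ^ j := by
    funext j; rw [pow_succ]; ring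
  rw [this, tsum_mul_left, tsum_geometric_of_lt_one h0 h1]

/-- Key scalar bound: for `0 ≤ e` and `B > 1`, `B^e ≤ exp e * (1 + log B * B^e)`. -/
lemma key_scalar_aux (e : ℝ) (he : 0 ≤ e) (B : ℝ) (hB : 1 < B) :
    B ^ e ≤ Real.exp e * (1 + Real.log B * B ^ e) := by
  have hB0 : (0:ℝ) < B := lt_trans one_pos hB
  have hlog : 0 < Real.log B := Real.log_pos hB
  have hXpos : 0 < B ^ e := Real.rpow_pos_of_pos hB0 e
  rcases le_or_gt (Real.log B) 1 with h | h
  · have h1 : B ^ e = Real.exp (Real.log B * e) := Real.rpow_def_of_pos hB0 e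
    have h2 : Real.exp (Real.log B * e) ≤ Real.exp e := by
      apply Real.exp_le_exp.mpr
      nlinarith
    have h3 : 0 ≤ Real.log B * B ^ e := by positivity
    nlinarith [Real.exp_pos e]
  · have h1 : B ^ e ≤ Real.log B * B ^ e := le_mul_of_one_le_left hXpos.le h.le
    have h2 : (1:ℝ) ≤ Real.exp e := Real.one_le_exp he
    have h3 : 0 ≤ Real.log B * B ^ e := by positivity
    nlinarith

/-- Lemma 5.1(1): if `d < 0` and `c + d < 0`, then there is `A > 0` such that for all
`B > 1`, `∑_{j=1}^∞ 2^{cj} min(1, B·2^{dj}) ≤ A(1 + (log B)·B^{−c/d})`. -/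
theorem sum_min_bound_of_neg (c d : ℝ) (hd : d < 0) (hcd : c + d < 0) :
    ∃ A : ℝ, 0 < A ∧ ∀ B : ℝ, 1 < B →
      Summable (fun j : ℕ =>
        (2 : ℝ) ^ (c * ((j : ℝ) + 1)) * min 1 (B * (2 : ℝ) ^ (d * ((j : ℝ) + 1)))) ∧
      (∑' j : ℕ, (2 : ℝ) ^ (c * ((j : ℝ) + 1)) * min 1 (B * (2 : ℝ) ^ (d * ((j : ℝ) + 1)))) ≤
        A * (1 + Real.log B * B ^ (-c / d)) := by
  have h2 : (1:ℝ) < 2 := one_lt_two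
  set r : ℝ := (2:ℝ) ^ (c + d) with hr_def
  have hr0 : 0 < r := Real.rpow_pos_of_pos two_pos _
  have hr1 : r < 1 := Real.rpow_lt_one_of_one_lt_of_neg h2 hcd
  -- pointwise bound by `B * r^(j+1)`
  have hpt : ∀ B : ℝ, 0 < B → ∀ j : ℕ,
      (2:ℝ) ^ (c * ((j:ℝ) + 1)) * min 1 (B * (2:ℝ) ^ (d * ((j:ℝ) + 1))) ≤ B * r ^ (j + 1) := by
    intro B hB j
    have h1 : min 1 (B * (2:ℝ) ^ (d * ((j:ℝ) + 1))) ≤ B * (2:ℝ) ^ (d * ((j:ℝ) + 1)) :=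
      min_le_right _ _
    have h2' : (0:ℝ) ≤ (2:ℝ) ^ (c * ((j:ℝ) + 1)) := (Real.rpow_pos_of_pos two_pos _).le
    calc (2:ℝ) ^ (c * ((j:ℝ) + 1)) * min 1 (B * (2:ℝ) ^ (d * ((j:ℝ) + 1)))
        ≤ (2:ℝ) ^ (c * ((j:ℝ) + 1)) * (B * (2:ℝ) ^ (d * ((j:ℝ) + 1))) :=
          mul_le_mul_of_nonneg_left h1 h2'
      _ = B * r ^ (j + 1) := by
          rw [pow_succ_eq_aux c j, pow_succ_eq_aux d j, hr_def,
            Real.rpow_add two_pos, mul_pow]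
          ring
  have hnn : ∀ B : ℝ, 0 < B → ∀ j : ℕ,
      0 ≤ (2:ℝ) ^ (c * ((j:ℝ) + 1)) * min 1 (B * (2:ℝ) ^ (d * ((j:ℝ) + 1))) := by
    intro B hB j
    apply mul_nonneg (Real.rpow_pos_of_pos two_pos _).le
    exact le_min zero_le_one (by positivity)
  have hgeom : Summable (fun j : ℕ => r ^ j) := summable_geometric_of_lt_one hr0.le hr1
  have hsummable : ∀ B : ℝ, 0 < B → Summable (fun j : ℕ =>
      (2:ℝ) ^ (c * ((j:ℝ) + 1)) * min 1 (B * (2:ℝ) ^ (d * ((j:ℝ) + 1)))) := by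
    intro B hB
    apply Summable.of_nonneg_of_le (hnn B hB) (hpt B hB)
    have : (fun j : ℕ => B * r ^ (j + 1)) = fun j : ℕ => (B * r) * r ^ j := by
      funext j; rw [pow_succ]; ring
    rw [this]
    exact hgeom.mul_left _
  rcases lt_or_ge c 0 with hc | hc
  · -- easy case: c < 0
    set s : ℝ := (2:ℝ) ^ c with hs_def
    have hs0 : 0 < s := Real.rpow_pos_of_pos two_pos _
    have hs1 : s < 1 := Real.rpow_lt_one_of_one_lt_of_neg h2 hc
    have h1s : (0:ℝ) < 1 - s := by linarith
    refine ⟨s * (1 - s)⁻¹, mul_pos hs0 (inv_pos.mpr h1s), fun B hB => ?_⟩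
    have hB0 : (0:ℝ) < B := lt_trans one_pos hB
    refine ⟨hsummable B hB0, ?_⟩
    have hsum_s : Summable (fun j : ℕ => s ^ (j + 1)) := by
      have : (fun j : ℕ => s ^ (j + 1)) = fun j : ℕ => s * s ^ j := by
        funext j; rw [pow_succ]; ring
      rw [this]
      exact (summable_geometric_of_lt_one hs0.le hs1).mul_left _
    have hle : (∑' j : ℕ, (2:ℝ) ^ (c * ((j:ℝ) + 1)) * min 1 (B * (2:ℝ) ^ (d * ((j:ℝ) + 1))))
        ≤ ∑' j : ℕ, s ^ (j + 1) := by
      apply Summable.tsum_le_tsum _ (hsummable B hB0) hsum_s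
      intro j
      calc (2:ℝ) ^ (c * ((j:ℝ) + 1)) * min 1 (B * (2:ℝ) ^ (d * ((j:ℝ) + 1)))
          ≤ (2:ℝ) ^ (c * ((j:ℝ) + 1)) * 1 :=
            mul_le_mul_of_nonneg_left (min_le_left _ _)
              (Real.rpow_pos_of_pos two_pos _).le
        _ = s ^ (j + 1) := by rw [mul_one, pow_succ_eq_aux c j]
    rw [tsum_geom_succ_aux s hs0.le hs1] at hle
    have hL : 0 ≤ Real.log B * B ^ (-c / d) := by
      have := (Real.log_pos hB).le
      positivity
    nlinarith [mul_pos hs0 (inv_pos.mpr (by linarith : (0:ℝ) < 1 - s))]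
  · -- main case: 0 ≤ c
    set K1 : ℝ := (2:ℝ) ^ c with hK1_def
    have hK1 : 0 < K1 := Real.rpow_pos_of_pos two_pos _
    set K2 : ℝ := K1 * r * (1 - r)⁻¹ with hK2_def
    have hK2 : 0 < K2 := by
      have : (0:ℝ) < 1 - r := by linarith
      positivity
    set δ : ℝ := ((-d) * Real.log 2)⁻¹ with hδ_def
    have hdlog : (0:ℝ) < (-d) * Real.log 2 := by
      have := Real.log_pos h2
      nlinarith
    have hδ : 0 < δ := inv_pos.mpr hdlog
    set E : ℝ := Real.exp (-c / d) with hE_def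
    have hE : 0 < E := Real.exp_pos _
    have hecd : 0 ≤ -c / d := by
      rw [div_nonneg_iff]
      right
      constructor <;> linarith
    refine ⟨K1 * E + K1 * δ + K2 * E, by positivity, fun B hB => ?_⟩
    have hB0 : (0:ℝ) < B := lt_trans one_pos hB
    have hlogB : 0 < Real.log B := Real.log_pos hB
    refine ⟨hsummable B hB0, ?_⟩
    set X : ℝ := B ^ (-c / d) with hX_def
    have hX : 0 < X := Real.rpow_pos_of_pos hB0 _
    set t : ℝ := Real.log B * δ with ht_def
    have ht0 : 0 < t := by positivity
    obtain ⟨J, htJ, hJt⟩ : ∃ J : ℕ, t ≤ (J : ℝ) ∧ (J : ℝ) ≤ t + 1 :=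
      ⟨⌈t⌉₊, Nat.le_ceil t, (Nat.ceil_lt_add_one ht0.le).le⟩
    -- `2^(c*t) = X`
    have hct : (2:ℝ) ^ (c * t) = X := by
      rw [hX_def, Real.rpow_def_of_pos two_pos, Real.rpow_def_of_pos hB0]
      congr 1
      have hlog2 : Real.log 2 ≠ 0 := (Real.log_pos h2).ne'
      have hd' : d ≠ 0 := hd.ne
      rw [ht_def, hδ_def, mul_inv]
      field_simp
    -- `2^(c*J) ≤ K1 * X`
    have h2cJ : (2:ℝ) ^ (c * (J:ℝ)) ≤ K1 * X := by
      have h1 : c * (J:ℝ) ≤ c * (t + 1) := mul_le_mul_of_nonneg_left hJt hc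
      calc (2:ℝ) ^ (c * (J:ℝ)) ≤ (2:ℝ) ^ (c * (t + 1)) :=
            Real.rpow_le_rpow_of_exponent_le h2.le h1
        _ = K1 * X := by
            rw [← hct, hK1_def, ← Real.rpow_add two_pos]
            congr 1; ring
    -- `B * 2^(d*J) ≤ 1`
    have hBdJ : B * (2:ℝ) ^ (d * (J:ℝ)) ≤ 1 := by
      have h1 : Real.log B ≤ (J:ℝ) * ((-d) * Real.log 2) := by
        have h2' : t * ((-d) * Real.log 2) ≤ (J:ℝ) * ((-d) * Real.log 2) :=
          mul_le_mul_of_nonneg_right htJ hdlog.le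
        have h3 : t * ((-d) * Real.log 2) = Real.log B := by
          rw [ht_def, hδ_def, mul_assoc, inv_mul_cancel₀ hdlog.ne', mul_one]
        linarith
      calc B * (2:ℝ) ^ (d * (J:ℝ))
          = Real.exp (Real.log B) * Real.exp (Real.log 2 * (d * (J:ℝ))) := by
            rw [Real.exp_log hB0, Real.rpow_def_of_pos two_pos]
        _ = Real.exp (Real.log B + Real.log 2 * (d * (J:ℝ))) := (Real.exp_add _ _).symm
        _ ≤ Real.exp 0 := Real.exp_le_exp.mpr (by nlinarith)
        _ = 1 := Real.exp_zero
    -- split the sum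
    have hf := hsummable B hB0
    have hsplit := Summable.sum_add_tsum_nat_add (f := fun j : ℕ =>
      (2:ℝ) ^ (c * ((j:ℝ) + 1)) * min 1 (B * (2:ℝ) ^ (d * ((j:ℝ) + 1)))) J hf
    -- head bound
    have hhead : (∑ j ∈ Finset.range J,
        (2:ℝ) ^ (c * ((j:ℝ) + 1)) * min 1 (B * (2:ℝ) ^ (d * ((j:ℝ) + 1))))
        ≤ (J : ℝ) * ((2:ℝ) ^ (c * (J:ℝ))) := by
      have h1 : ∀ j ∈ Finset.range J,
          (2:ℝ) ^ (c * ((j:ℝ) + 1)) * min 1 (B * (2:ℝ) ^ (d * ((j:ℝ) + 1)))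
          ≤ (2:ℝ) ^ (c * (J:ℝ)) := by
        intro j hj
        have hj' : (j:ℝ) + 1 ≤ (J:ℝ) := by
          have := Finset.mem_range.mp hj
          exact_mod_cast Nat.succ_le_of_lt this
        calc (2:ℝ) ^ (c * ((j:ℝ) + 1)) * min 1 (B * (2:ℝ) ^ (d * ((j:ℝ) + 1)))
            ≤ (2:ℝ) ^ (c * ((j:ℝ) + 1)) * 1 :=
              mul_le_mul_of_nonneg_left (min_le_left _ _)
                (Real.rpow_pos_of_pos two_pos _).le
          _ = (2:ℝ) ^ (c * ((j:ℝ) + 1)) := mul_one _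
          _ ≤ (2:ℝ) ^ (c * (J:ℝ)) :=
              Real.rpow_le_rpow_of_exponent_le h2.le
                (mul_le_mul_of_nonneg_left hj' hc)
      calc (∑ j ∈ Finset.range J,
          (2:ℝ) ^ (c * ((j:ℝ) + 1)) * min 1 (B * (2:ℝ) ^ (d * ((j:ℝ) + 1))))
          ≤ (Finset.range J).card • ((2:ℝ) ^ (c * (J:ℝ))) :=
            Finset.sum_le_card_nsmul _ _ _ h1
        _ = (J : ℝ) * ((2:ℝ) ^ (c * (J:ℝ))) := by
            rw [Finset.card_range, nsmul_eq_mul]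
    -- tail bound
    have htail : (∑' j : ℕ,
        (2:ℝ) ^ (c * ((↑(j + J):ℝ) + 1)) * min 1 (B * (2:ℝ) ^ (d * ((↑(j + J):ℝ) + 1))))
        ≤ (B * r ^ (J + 1)) * (1 - r)⁻¹ := by
      have hs1 : Summable (fun j : ℕ =>
          (2:ℝ) ^ (c * ((↑(j + J):ℝ) + 1)) * min 1 (B * (2:ℝ) ^ (d * ((↑(j + J):ℝ) + 1)))) :=
        (summable_nat_add_iff J).mpr hf
      have hs2 : Summable (fun j : ℕ => (B * r ^ (J + 1)) * r ^ j) := hgeom.mul_left _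
      have hle : ∀ j : ℕ,
          (2:ℝ) ^ (c * ((↑(j + J):ℝ) + 1)) * min 1 (B * (2:ℝ) ^ (d * ((↑(j + J):ℝ) + 1)))
          ≤ (B * r ^ (J + 1)) * r ^ j := by
        intro j
        have := hpt B hB0 (j + J)
        calc (2:ℝ) ^ (c * ((↑(j + J):ℝ) + 1)) * min 1 (B * (2:ℝ) ^ (d * ((↑(j + J):ℝ) + 1)))
            ≤ B * r ^ (j + J + 1) := this
          _ = (B * r ^ (J + 1)) * r ^ j := by
              rw [show j + J + 1 = (J + 1) + j by ring, pow_add]; ring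
      calc (∑' j : ℕ,
          (2:ℝ) ^ (c * ((↑(j + J):ℝ) + 1)) * min 1 (B * (2:ℝ) ^ (d * ((↑(j + J):ℝ) + 1))))
          ≤ ∑' j : ℕ, (B * r ^ (J + 1)) * r ^ j := Summable.tsum_le_tsum hle hs1 hs2
        _ = (B * r ^ (J + 1)) * (1 - r)⁻¹ := by
            rw [tsum_mul_left, tsum_geometric_of_lt_one hr0.le hr1]
    -- `B * r^(J+1) ≤ 2^(c*J) * r`
    have hBr : B * r ^ (J + 1) ≤ (2:ℝ) ^ (c * (J:ℝ)) * r := by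
      have heq : B * r ^ (J + 1)
          = (B * (2:ℝ) ^ (d * (J:ℝ))) * ((2:ℝ) ^ (c * (J:ℝ)) * r) := by
        rw [show r ^ (J + 1) = (2:ℝ) ^ ((c + d) * ((J:ℝ) + 1)) from (pow_succ_eq_aux (c + d) J).symm,
          hr_def, ← Real.rpow_add two_pos, mul_assoc, ← Real.rpow_add two_pos]
        congr 1
        ring
      rw [heq]
      have hpos : 0 ≤ (2:ℝ) ^ (c * (J:ℝ)) * r :=
        mul_nonneg (Real.rpow_pos_of_pos two_pos _).le hr0.le
      nlinarith [mul_le_mul_of_nonneg_right hBdJ hpos]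
    -- assemble
    have hXE : X ≤ E * (1 + Real.log B * X) := by
      rw [hX_def, hE_def]
      exact key_scalar_aux (-c / d) hecd B hB
    have htailX : (∑' j : ℕ,
        (2:ℝ) ^ (c * ((↑(j + J):ℝ) + 1)) * min 1 (B * (2:ℝ) ^ (d * ((↑(j + J):ℝ) + 1))))
        ≤ K2 * X := by
      have hinv : (0:ℝ) < (1 - r)⁻¹ := inv_pos.mpr (by linarith)
      calc (∑' j : ℕ,
          (2:ℝ) ^ (c * ((↑(j + J):ℝ) + 1)) * min 1 (B * (2:ℝ) ^ (d * ((↑(j + J):ℝ) + 1))))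
          ≤ (B * r ^ (J + 1)) * (1 - r)⁻¹ := htail
        _ ≤ ((2:ℝ) ^ (c * (J:ℝ)) * r) * (1 - r)⁻¹ :=
            mul_le_mul_of_nonneg_right hBr hinv.le
        _ ≤ ((K1 * X) * r) * (1 - r)⁻¹ := by
            have := mul_le_mul_of_nonneg_right h2cJ hr0.le
            exact mul_le_mul_of_nonneg_right this hinv.le
        _ = K2 * X := by rw [hK2_def]; ring
    have hheadX : (∑ j ∈ Finset.range J,
        (2:ℝ) ^ (c * ((j:ℝ) + 1)) * min 1 (B * (2:ℝ) ^ (d * ((j:ℝ) + 1))))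
        ≤ (t + 1) * (K1 * X) := by
      have h1 : (J:ℝ) * ((2:ℝ) ^ (c * (J:ℝ))) ≤ (t + 1) * (K1 * X) := by
        apply mul_le_mul hJt h2cJ (Real.rpow_pos_of_pos two_pos _).le (by linarith)
      linarith [hhead]
    rw [← hsplit]
    have hL : 0 ≤ Real.log B * X := by positivity
    have expand : (t + 1) * (K1 * X) + K2 * X
        = K1 * δ * (Real.log B * X) + K1 * X + K2 * X := by
      rw [ht_def]; ring
    have hfin1 : K1 * X + K2 * X ≤ (K1 + K2) * (E * (1 + Real.log B * X)) := by
      nlinarith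
    have hfin2 : K1 * δ * (Real.log B * X) ≤ K1 * δ * (1 + Real.log B * X) := by
      nlinarith
    nlinarith [htailX, hheadX]
end

section
/- Let c, d ∈ ℝ with c < 0 and d > 0. Then there exists a constant A > 0 (depending only on c and d) such that for every real B with 0 < B < 1, the sum ∑_{j=1}^{∞} 2^{cj}·min(1, B·2^{dj}) converges and satisfies ∑_{j=1}^{∞} 2^{cj}·min(1, B·2^{dj}) ≤ A·(B + |log B|·B^{−c/d}). (Lemma 5.1(2).) -/
lemma aux_min_le_rpow {y t : ℝ} (hy : 0 ≤ y) (ht0 : 0 < t) (ht1 : t ≤ 1) :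
    min 1 y ≤ y ^ t := by
  rcases le_total y 1 with h | h
  · rw [min_eq_right h]
    rcases eq_or_lt_of_le hy with h0 | h0
    · simp [← h0, Real.zero_rpow ht0.ne']
    · calc y = y ^ (1:ℝ) := (Real.rpow_one y).symm
        _ ≤ y ^ t := Real.rpow_le_rpow_of_exponent_ge h0 h ht1
  · rw [min_eq_left h]
    calc (1:ℝ) = 1 ^ t := (Real.one_rpow t).symm
      _ ≤ y ^ t := Real.rpow_le_rpow (by norm_num) h ht0.le

lemma aux_pow_eq (e : ℝ) (j : ℕ) : (2:ℝ) ^ (e * ((j:ℝ)+1)) = ((2:ℝ) ^ e) ^ (j+1) := by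
  rw [← Real.rpow_natCast ((2:ℝ)^e) (j+1), ← Real.rpow_mul (by norm_num : (0:ℝ) ≤ 2)]
  push_cast; ring_nf

/-- Lemma 5.1(2): if `c < 0` and `d > 0`, then there is `A > 0` such that for all
`0 < B < 1`, `∑_{j=1}^∞ 2^{cj} min(1, B·2^{dj}) ≤ A(B + |log B|·B^{−c/d})`. -/
theorem sum_min_bound_of_pos (c d : ℝ) (hc : c < 0) (hd : 0 < d) :
    ∃ A : ℝ, 0 < A ∧ ∀ B : ℝ, 0 < B → B < 1 →
      Summable (fun j : ℕ =>
        (2 : ℝ) ^ (c * ((j : ℝ) + 1)) * min 1 (B * (2 : ℝ) ^ (d * ((j : ℝ) + 1)))) ∧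
      (∑' j : ℕ, (2 : ℝ) ^ (c * ((j : ℝ) + 1)) * min 1 (B * (2 : ℝ) ^ (d * ((j : ℝ) + 1)))) ≤
        A * (B + |Real.log B| * B ^ (-c / d)) := by
  have h20 : (0:ℝ) < 2 := by norm_num
  have hlog2 : 0 < Real.log 2 := Real.log_pos one_lt_two
  set r : ℝ := (2:ℝ) ^ c with hrdef
  have hr0 : 0 < r := Real.rpow_pos_of_pos h20 c
  have hr1 : r < 1 := Real.rpow_lt_one_of_one_lt_of_neg one_lt_two hc
  have hinv : 0 < (1 - r)⁻¹ := inv_pos.2 (by linarith)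
  set s : ℝ := (2:ℝ) ^ (c + d) with hsdef
  have hs0 : 0 < s := Real.rpow_pos_of_pos h20 _
  set C1 : ℝ := r * (1 - r)⁻¹ with hC1
  set C2 : ℝ := max (s * (1 - s)⁻¹) 0 with hC2
  set K : ℝ := 1 / (d * Real.log 2) + 1 / Real.log 2 + (1 - r)⁻¹ / Real.log 2 with hK
  have hC1p : 0 < C1 := mul_pos hr0 hinv
  have hC2nn : 0 ≤ C2 := le_max_right _ _
  have hKp : 0 < K := by
    have k1 : 0 < 1 / (d * Real.log 2) := by positivity
    have k2 : 0 < 1 / Real.log 2 := by positivity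
    have k3 : 0 ≤ (1 - r)⁻¹ / Real.log 2 := by positivity
    rw [hK]; linarith
  set A : ℝ := 2 * C1 + C2 + K + 1 with hA
  have hApos : 0 < A := by rw [hA]; linarith
  refine ⟨A, hApos, fun B hB0 hB1 => ?_⟩
  set f : ℕ → ℝ := fun j : ℕ =>
    (2 : ℝ) ^ (c * ((j : ℝ) + 1)) * min 1 (B * (2 : ℝ) ^ (d * ((j : ℝ) + 1))) with hf
  have hf0 : ∀ j, 0 ≤ f j := by
    intro j
    refine mul_nonneg (Real.rpow_nonneg (by norm_num) _) ?_
    exact le_min (by norm_num) (mul_nonneg hB0.le (Real.rpow_nonneg (by norm_num) _))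
  have hfle : ∀ j, f j ≤ r ^ (j+1) := by
    intro j
    calc f j ≤ (2 : ℝ) ^ (c * ((j : ℝ) + 1)) * 1 :=
          mul_le_mul_of_nonneg_left (min_le_left _ _) (Real.rpow_nonneg (by norm_num) _)
      _ = r ^ (j+1) := by rw [mul_one, hrdef, aux_pow_eq]
  have hgeo : Summable (fun j : ℕ => r ^ (j+1)) := by
    simpa [pow_succ] using (summable_geometric_of_lt_one hr0.le hr1).mul_right r
  have hsum : Summable f := Summable.of_nonneg_of_le hf0 hfle hgeo
  refine ⟨hsum, ?_⟩
  have hXnn : 0 ≤ |Real.log B| * B ^ (-c / d) :=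
    mul_nonneg (abs_nonneg _) (Real.rpow_nonneg hB0.le _)
  have htgeo : (∑' j : ℕ, r ^ (j+1)) = C1 := by
    have e : (fun j : ℕ => r ^ (j+1)) = fun j : ℕ => r ^ j * r := by
      funext j; rw [pow_succ]
    rw [e, tsum_mul_right, tsum_geometric_of_lt_one hr0.le hr1, hC1, mul_comm]
  rcases le_or_gt (1/2 : ℝ) B with hB2 | hB2
  -- case B ≥ 1/2
  · have h1 : (∑' j, f j) ≤ C1 := htgeo ▸ Summable.tsum_le_tsum hfle hsum hgeo
    have g1 : 2*C1*(1/2) ≤ 2*C1*B := mul_le_mul_of_nonneg_left hB2 (by linarith)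
    have g2 : 2*C1 ≤ A := by rw [hA]; linarith
    have g3 : 2*C1*B ≤ A*B := mul_le_mul_of_nonneg_right g2 hB0.le
    calc (∑' j, f j) ≤ C1 := h1
      _ ≤ A * B := by linarith
      _ ≤ A * (B + |Real.log B| * B ^ (-c/d)) :=
          mul_le_mul_of_nonneg_left (le_add_of_nonneg_right hXnn) hApos.le
  rcases lt_or_ge (c + d) 0 with hcd | hcd
  -- case c+d < 0
  · have hs1 : s < 1 := Real.rpow_lt_one_of_one_lt_of_neg one_lt_two hcd
    have hfles : ∀ j, f j ≤ B * s ^ (j+1) := by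
      intro j
      calc f j ≤ (2 : ℝ) ^ (c * ((j : ℝ) + 1)) * (B * (2 : ℝ) ^ (d * ((j : ℝ) + 1))) :=
            mul_le_mul_of_nonneg_left (min_le_right _ _) (Real.rpow_nonneg (by norm_num) _)
        _ = B * s ^ (j+1) := by
            rw [hsdef, ← aux_pow_eq (c+d) j, add_mul, Real.rpow_add h20]; ring
    have hsgeo : Summable (fun j : ℕ => B * s ^ (j+1)) := by
      simpa [pow_succ, mul_assoc] using
        (((summable_geometric_of_lt_one hs0.le hs1).mul_right s).mul_left B)
    have h1 : (∑' j, f j) ≤ B * (s * (1-s)⁻¹) := by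
      calc (∑' j, f j) ≤ ∑' j, B * s ^ (j+1) := Summable.tsum_le_tsum hfles hsum hsgeo
        _ = B * (s * (1-s)⁻¹) := by
            rw [tsum_mul_left]
            congr 1
            have e : (fun j : ℕ => s ^ (j+1)) = fun j : ℕ => s ^ j * s := by
              funext j; rw [pow_succ]
            rw [e, tsum_mul_right, tsum_geometric_of_lt_one hs0.le hs1, mul_comm]
    have hsC2 : s * (1-s)⁻¹ ≤ C2 := le_max_left _ _
    have hC2A : C2 ≤ A := by rw [hA]; linarith
    calc (∑' j, f j) ≤ B * (s * (1-s)⁻¹) := h1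
      _ ≤ B * C2 := mul_le_mul_of_nonneg_left hsC2 hB0.le
      _ ≤ B * A := mul_le_mul_of_nonneg_left hC2A hB0.le
      _ = A * B := mul_comm _ _
      _ ≤ A * (B + |Real.log B| * B ^ (-c/d)) :=
          mul_le_mul_of_nonneg_left (le_add_of_nonneg_right hXnn) hApos.le
  -- case c+d ≥ 0
  · set t : ℝ := -c / d with htdef
    have ht0 : 0 < t := div_pos (by linarith) hd
    have ht1 : t ≤ 1 := by rw [htdef, div_le_one hd]; linarith
    have hdt : d * t = -c := by rw [htdef]; field_simp
    have hBt0 : 0 < B ^ t := Real.rpow_pos_of_pos hB0 t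
    have hhead : ∀ j, f j ≤ B ^ t := by
      intro j
      have hy : (0:ℝ) ≤ B * (2 : ℝ) ^ (d * ((j : ℝ) + 1)) :=
        mul_nonneg hB0.le (Real.rpow_nonneg (by norm_num) _)
      have hzero : c * ((j:ℝ)+1) + d * ((j:ℝ)+1) * t = 0 := by
        linear_combination ((j:ℝ)+1) * hdt
      calc f j ≤ (2 : ℝ) ^ (c * ((j : ℝ) + 1)) *
            (B * (2 : ℝ) ^ (d * ((j : ℝ) + 1))) ^ t :=
            mul_le_mul_of_nonneg_left (aux_min_le_rpow hy ht0 ht1)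
              (Real.rpow_nonneg (by norm_num) _)
        _ = B ^ t := by
            rw [Real.mul_rpow hB0.le (Real.rpow_nonneg (by norm_num) _),
              ← Real.rpow_mul (by norm_num : (0:ℝ) ≤ 2), ← mul_assoc,
              mul_comm ((2:ℝ) ^ (c * ((j : ℝ) + 1))) (B ^ t), mul_assoc,
              ← Real.rpow_add h20, hzero, Real.rpow_zero, mul_one]
    have hlogB : Real.log B < 0 := Real.log_neg hB0 hB1
    have habs : |Real.log B| = -Real.log B := abs_of_neg hlogB
    have hlogge : Real.log 2 ≤ -Real.log B := by
      have h1 : Real.log B ≤ Real.log (1/2) := Real.log_le_log hB0 hB2.le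
      have h2 : Real.log (1/2 : ℝ) = -Real.log 2 := by rw [one_div, Real.log_inv]
      linarith
    set M : ℕ := ⌈(-Real.log B) / (d * Real.log 2)⌉₊ with hM
    have hMid : 0 ≤ (-Real.log B) / (d * Real.log 2) := div_nonneg (by linarith) (by positivity)
    have hMge : (-Real.log B) / (d * Real.log 2) ≤ (M:ℝ) := Nat.le_ceil _
    have hMle : (M:ℝ) < (-Real.log B) / (d * Real.log 2) + 1 := Nat.ceil_lt_add_one hMid
    have h1 : -Real.log B ≤ (M:ℝ) * (d * Real.log 2) := by
      rw [div_le_iff₀ (by positivity)] at hMge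
      linarith
    have hrM : r ^ M ≤ B ^ t := by
      have e1 : r ^ M = Real.exp (Real.log 2 * (c * (M:ℝ))) := by
        rw [hrdef, ← Real.rpow_natCast ((2:ℝ)^c) M,
          ← Real.rpow_mul (by norm_num : (0:ℝ) ≤ 2), Real.rpow_def_of_pos h20]
      have e2 : B ^ t = Real.exp (Real.log B * t) := Real.rpow_def_of_pos hB0 t
      rw [e1, e2]
      apply Real.exp_le_exp.2
      have h3 : c * ((M:ℝ) * (d * Real.log 2)) ≤ c * (-Real.log B) :=
        mul_le_mul_of_nonpos_left h1 hc.le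
      have e3 : d * (Real.log B * t) = c * (-Real.log B) := by
        rw [show d * (Real.log B * t) = Real.log B * (d * t) by ring, hdt]; ring
      have h4 : d * (Real.log 2 * (c * (M:ℝ))) ≤ d * (Real.log B * t) := by
        rw [e3]; linarith [h3]
      exact le_of_mul_le_mul_left h4 hd
    rw [← hsum.sum_add_tsum_nat_add M]
    have hheadsum : (∑ j ∈ Finset.range M, f j) ≤ (M:ℝ) * B ^ t := by
      calc (∑ j ∈ Finset.range M, f j) ≤ (Finset.range M).card • (B ^ t) :=
            Finset.sum_le_card_nsmul _ _ _ (fun j _ => hhead j)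
        _ = (M:ℝ) * B ^ t := by rw [Finset.card_range, nsmul_eq_mul]
    have hshiftsum : Summable (fun j : ℕ => f (j + M)) := (summable_nat_add_iff M).2 hsum
    have egeo : (fun j : ℕ => r ^ (j + M + 1)) = fun j : ℕ => r ^ j * r ^ (M+1) := by
      funext j; rw [← pow_add, add_assoc]
    have hshiftgeo : Summable (fun j : ℕ => r ^ (j + M + 1)) := by
      rw [egeo]; exact (summable_geometric_of_lt_one hr0.le hr1).mul_right _
    have htail : (∑' j : ℕ, f (j + M)) ≤ (1 - r)⁻¹ * B ^ t := by
      calc (∑' j : ℕ, f (j + M)) ≤ ∑' j : ℕ, r ^ (j + M + 1) :=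
            Summable.tsum_le_tsum (fun j => hfle (j + M)) hshiftsum hshiftgeo
        _ = (1 - r)⁻¹ * r ^ (M + 1) := by
            rw [egeo, tsum_mul_right, tsum_geometric_of_lt_one hr0.le hr1]
        _ ≤ (1 - r)⁻¹ * B ^ t := by
            refine mul_le_mul_of_nonneg_left ?_ hinv.le
            calc r ^ (M+1) ≤ r ^ M := pow_le_pow_of_le_one hr0.le hr1.le (by omega)
              _ ≤ B ^ t := hrM
    have hMbound : (M:ℝ) ≤ (-Real.log B) * (1 / (d * Real.log 2) + 1 / Real.log 2) := by
      have h2 : (1:ℝ) ≤ (-Real.log B) / Real.log 2 := by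
        rw [le_div_iff₀ hlog2]; linarith
      have h5 : (M:ℝ) ≤ (-Real.log B) / (d * Real.log 2) + (-Real.log B) / Real.log 2 := by
        have : (1:ℝ) ≤ (-Real.log B) / Real.log 2 := h2
        linarith
      calc (M:ℝ) ≤ (-Real.log B) / (d * Real.log 2) + (-Real.log B) / Real.log 2 := h5
        _ = (-Real.log B) * (1 / (d * Real.log 2) + 1 / Real.log 2) := by ring
    have hinvbound : (1 - r)⁻¹ ≤ (-Real.log B) * ((1 - r)⁻¹ / Real.log 2) := by
      have h2 : (1:ℝ) ≤ (-Real.log B) / Real.log 2 := by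
        rw [le_div_iff₀ hlog2]; linarith
      calc (1 - r)⁻¹ = (1 - r)⁻¹ * 1 := (mul_one _).symm
        _ ≤ (1 - r)⁻¹ * ((-Real.log B) / Real.log 2) :=
            mul_le_mul_of_nonneg_left h2 hinv.le
        _ = (-Real.log B) * ((1 - r)⁻¹ / Real.log 2) := by ring
    have hsum2 : (M:ℝ) + (1 - r)⁻¹ ≤ (-Real.log B) * K := by
      rw [hK]
      linarith [hMbound, hinvbound]
    have key : (∑ j ∈ Finset.range M, f j) + (∑' j : ℕ, f (j + M)) ≤
        ((-Real.log B) * K) * B ^ t := by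
      calc (∑ j ∈ Finset.range M, f j) + (∑' j : ℕ, f (j + M))
          ≤ (M:ℝ) * B ^ t + (1 - r)⁻¹ * B ^ t := add_le_add hheadsum htail
        _ = ((M:ℝ) + (1 - r)⁻¹) * B ^ t := by ring
        _ ≤ ((-Real.log B) * K) * B ^ t := mul_le_mul_of_nonneg_right hsum2 hBt0.le
    calc (∑ j ∈ Finset.range M, f j) + (∑' j : ℕ, f (j + M))
        ≤ ((-Real.log B) * K) * B ^ t := key
      _ ≤ A * (B + |Real.log B| * B ^ t) := by
          rw [habs]
          have hXX : 0 ≤ (-Real.log B) * B ^ t := mul_nonneg (by linarith) hBt0.le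
          have hKA : K ≤ A := by rw [hA]; linarith
          have s1 : K * ((-Real.log B) * B ^ t) ≤ A * ((-Real.log B) * B ^ t) :=
            mul_le_mul_of_nonneg_right hKA hXX
          have s2 : 0 ≤ A * B := mul_nonneg hApos.le hB0.le
          have expand : A * (B + (-Real.log B) * B ^ t)
              = A * B + A * ((-Real.log B) * B ^ t) := by ring
          linarith [s1, s2, expand]
end

section
/- Let n ≥ 1 be an integer, a ∈ ℝ, x ∈ ℝ^{2n} and t ∈ ℝ. Let J be the 2n×2n real matrix [[0, Iₙ],[−Iₙ, 0]], B = |x|²·I_{2n} + a·t·J, and K = x·xᵀ (the rank-one matrix with entries x_i x_j). Then det(B + 2K) = (|x|⁴ + a²t²)^{n−1}·(3|x|⁴ + a²t²). (Equation (3.12) in the proof of Lemma 3.5.) -/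
noncomputable section

/-- The standard symplectic matrix `J = [[0, Iₙ], [−Iₙ, 0]]` as a `2n × 2n` real matrix,
indexed by `Fin n ⊕ Fin n`. -/
def Jmat (n : ℕ) : Matrix (Fin n ⊕ Fin n) (Fin n ⊕ Fin n) ℝ :=
  Matrix.fromBlocks 0 1 (-1) 0

open Matrix

lemma Jmat_sq (n : ℕ) : Jmat n * Jmat n = -1 := by
  rw [Jmat, Matrix.fromBlocks_multiply, ← Matrix.fromBlocks_one, Matrix.fromBlocks_neg]
  simp

lemma detB_aux (n : ℕ) (c s : ℝ) (hs : s ≠ 0) :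
    (s • (1 : Matrix (Fin n ⊕ Fin n) (Fin n ⊕ Fin n) ℝ) + c • Jmat n).det = (s^2 + c^2)^n := by
  have hrw : s • (1 : Matrix (Fin n ⊕ Fin n) (Fin n ⊕ Fin n) ℝ) + c • Jmat n
      = Matrix.fromBlocks (s • 1) (c • 1) (-(c • 1)) (s • 1) := by
    rw [Jmat, ← Matrix.fromBlocks_one, Matrix.fromBlocks_smul, Matrix.fromBlocks_smul,
      Matrix.fromBlocks_add]
    simp
  haveI : Invertible (s • (1 : Matrix (Fin n) (Fin n) ℝ)) :=
    ⟨s⁻¹ • 1, by rw [smul_mul_smul_comm, inv_mul_cancel₀ hs, one_mul, one_smul],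
      by rw [smul_mul_smul_comm, mul_inv_cancel₀ hs, one_mul, one_smul]⟩
  have hinvOf : ⅟(s • (1 : Matrix (Fin n) (Fin n) ℝ)) = s⁻¹ • 1 :=
    invOf_eq_right_inv (by rw [smul_mul_smul_comm, mul_inv_cancel₀ hs, one_mul, one_smul])
  rw [hrw, Matrix.det_fromBlocks₂₂, hinvOf]
  have h1 : (s • (1 : Matrix (Fin n) (Fin n) ℝ)
      - (c • 1) * (s⁻¹ • 1) * (-(c • 1))) = (s + c^2 * s⁻¹) • 1 := by
    simp [Matrix.smul_mul, Matrix.mul_smul, smul_smul, sub_neg_eq_add, ← add_smul]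
    ring_nf
  rw [h1, Matrix.det_smul, Matrix.det_smul, Matrix.det_one]
  simp only [Fintype.card_fin, mul_one]
  rw [← mul_pow]
  congr 1
  field_simp

lemma detB (n : ℕ) (c s : ℝ) :
    (s • (1 : Matrix (Fin n ⊕ Fin n) (Fin n ⊕ Fin n) ℝ) + c • Jmat n).det = (s^2 + c^2)^n := by
  have hcont1 : Continuous fun s : ℝ =>
      (s • (1 : Matrix (Fin n ⊕ Fin n) (Fin n ⊕ Fin n) ℝ) + c • Jmat n).det :=
    Continuous.matrix_det ((continuous_id.smul continuous_const).add continuous_const)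
  have hcont2 : Continuous fun s : ℝ => (s^2 + c^2)^n := by continuity
  have h := Continuous.ext_on (dense_compl_singleton (0:ℝ)) hcont1 hcont2
    (fun s hs => detB_aux n c s hs)
  exact congrFun h s

/-- Equation (3.12): with `B = |x|²·I + a·t·J` and `K = x·xᵀ`,
`det(B + 2K) = (|x|⁴ + a²t²)^{n−1}·(3|x|⁴ + a²t²)`. -/
theorem det_B_add_two_K (n : ℕ) (hn : 1 ≤ n) (a t : ℝ) (x : Fin n ⊕ Fin n → ℝ) :
    ((∑ i, x i ^ 2) • (1 : Matrix (Fin n ⊕ Fin n) (Fin n ⊕ Fin n) ℝ)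
        + (a * t) • Jmat n + (2 : ℝ) • Matrix.vecMulVec x x).det
      = ((∑ i, x i ^ 2) ^ 2 + a ^ 2 * t ^ 2) ^ (n - 1)
          * (3 * (∑ i, x i ^ 2) ^ 2 + a ^ 2 * t ^ 2) := by
  have hpow : ∀ y : ℝ, y ^ n = y ^ (n-1) * y := fun y => by
    conv_lhs => rw [show n = (n-1)+1 by omega]
    rw [pow_succ]
  set s := ∑ i, x i ^ 2 with hs_def
  by_cases hs : s = 0
  · have hx : ∀ i, x i = 0 := by
      intro i
      have h1 : x i ^ 2 = 0 :=
        (Finset.sum_eq_zero_iff_of_nonneg (fun i _ => sq_nonneg (x i))).1 hs i (Finset.mem_univ i)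
      exact pow_eq_zero_iff two_ne_zero |>.1 h1
    have hK : Matrix.vecMulVec x x = 0 := by
      ext i j; simp [Matrix.vecMulVec, hx]
    rw [hs, hK, smul_zero, add_zero, zero_smul, zero_add,
      show ((a*t) • Jmat n) = (0:ℝ) • 1 + (a*t) • Jmat n by rw [zero_smul, zero_add],
      detB]
    rw [hpow]
    ring
  · have h1 : (0:ℝ) < s^2 := lt_of_le_of_ne (sq_nonneg s) (Ne.symm (pow_ne_zero 2 hs))
    have hd : (0:ℝ) < s^2 + (a*t)^2 := by nlinarith [sq_nonneg (a*t)]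
    set B := s • (1 : Matrix (Fin n ⊕ Fin n) (Fin n ⊕ Fin n) ℝ) + (a*t) • Jmat n with hB_def
    have hBdet : B.det = (s^2 + (a*t)^2)^n := detB n (a*t) s
    have hBunit : IsUnit B.det := by rw [hBdet]; exact (pow_pos hd n).ne'.isUnit
    have hJ := Jmat_sq n
    have hBinv : B⁻¹ = (s^2+(a*t)^2)⁻¹ • (s • 1 - (a*t) • Jmat n) := by
      apply Matrix.inv_eq_right_inv
      rw [Matrix.mul_smul]
      have hmul : B * (s • 1 - (a*t) • Jmat n) = (s^2+(a*t)^2) • 1 := by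
        rw [hB_def]
        simp only [Matrix.mul_sub, Matrix.add_mul, Matrix.smul_mul, Matrix.mul_smul,
          Matrix.mul_one, Matrix.one_mul, hJ, smul_smul, smul_neg]
        module
      rw [hmul, smul_smul, inv_mul_cancel₀ hd.ne', one_smul]
    have hrw2 : (2:ℝ) • Matrix.vecMulVec x x
        = Matrix.replicateCol Unit x * Matrix.replicateRow Unit ((2:ℝ) • x) := by
      rw [← Matrix.vecMulVec_eq]
      ext i j
      simp [Matrix.vecMulVec]
      ring
    have hJx : x ⬝ᵥ (Jmat n) *ᵥ x = 0 := by
      rw [Jmat, Matrix.fromBlocks_mulVec]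
      simp [dotProduct, Fintype.sum_sum_type, Matrix.one_mulVec, Matrix.zero_mulVec,
        Matrix.neg_mulVec, mul_comm]
    have hxx : x ⬝ᵥ x = s := by
      simp [dotProduct, hs_def, sq]
    rw [hrw2, Matrix.det_add_replicateCol_mul_replicateRow hBunit, hBdet, hBinv, ← Matrix.replicateRow_vecMul,
      Matrix.det_unique]
    simp only [Matrix.add_apply, Matrix.one_apply_eq, Matrix.replicateRow_mul_replicateCol_apply,
      ← Matrix.dotProduct_mulVec, Matrix.smul_mulVec, Matrix.sub_mulVec,
      Matrix.one_mulVec, dotProduct_smul, dotProduct_sub,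
      smul_dotProduct, smul_eq_mul, hJx, hxx, mul_zero, sub_zero]
    rw [hpow]
    field_simp
    ring
end
end

section
/- Let m ≥ 1 be an integer, a ∈ ℝ with a ≠ 0, and β ∈ ℝ with β ∈ (−1,0) ∪ (0,∞). Define f(x,t) = 2(β+1)|x|⁸ + (3(β+2) − 2a²)|x|⁴t² + (β+2)a²t⁴ for x ∈ ℝ^{m}, t ∈ ℝ, and C_β = ((β+2)/2)·(2β+5+√((2β+5)²−9)). Then: (i) if a² < C_β, then f(x,t) > 0 for all (x,t) ≠ (0,0); (ii) if a² = C_β, then there exist constants γ > 0 and c > 0 such that f(x,t) = γ·(|x|⁴ − c·t²)² for all (x,t); (iii) if a² > C_β, then there exist constants γ > 0 and c₁, c₂ > 0 with c₁ ≠ c₂ such that f(x,t) = γ·(|x|⁴ − c₁·t²)·(|x|⁴ − c₂·t²) for all (x,t). (Lemma 3.6, Case 1.) -/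
noncomputable section

/-- The quartic form `f(x,t) = 2(β+1)|x|⁸ + (3(β+2) − 2a²)|x|⁴t² + (β+2)a²t⁴`,
where `|x|² = ∑ᵢ xᵢ²` is the square of the Euclidean norm of `x ∈ ℝᵐ`. -/
def fQuartic (m : ℕ) (a β : ℝ) (x : Fin m → ℝ) (t : ℝ) : ℝ :=
  2 * (β + 1) * (∑ i, x i ^ 2) ^ 4
    + (3 * (β + 2) - 2 * a ^ 2) * (∑ i, x i ^ 2) ^ 2 * t ^ 2
    + (β + 2) * a ^ 2 * t ^ 4

/-- The constant `C_β = ((β+2)/2)(2β+5+√((2β+5)²−9))`. -/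
def Cbeta (β : ℝ) : ℝ := ((β + 2) / 2) * (2 * β + 5 + Real.sqrt ((2 * β + 5) ^ 2 - 9))

set_option maxHeartbeats 1000000 in
/-- Lemma 3.6, Case 1: for `β ∈ (−1,0) ∪ (0,∞)` and `a ≠ 0`:
(i) if `a² < C_β` then `f > 0` away from the origin;
(ii) if `a² = C_β` then `f(x,t) = γ(|x|⁴ − ct²)²` with `γ, c > 0`;
(iii) if `a² > C_β` then `f(x,t) = γ(|x|⁴ − c₁t²)(|x|⁴ − c₂t²)` with `γ > 0`,
`c₁, c₂ > 0`, `c₁ ≠ c₂`. -/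
theorem fQuartic_factorization_case1 (m : ℕ) (hm : 1 ≤ m) (a β : ℝ) (ha : a ≠ 0)
    (hβ : β ∈ Set.Ioo (-1 : ℝ) 0 ∪ Set.Ioi (0 : ℝ)) :
    (a ^ 2 < Cbeta β →
      ∀ (x : Fin m → ℝ) (t : ℝ), (x ≠ 0 ∨ t ≠ 0) → 0 < fQuartic m a β x t) ∧
    (a ^ 2 = Cbeta β →
      ∃ γ : ℝ, 0 < γ ∧ ∃ c : ℝ, 0 < c ∧ ∀ (x : Fin m → ℝ) (t : ℝ),
        fQuartic m a β x t = γ * ((∑ i, x i ^ 2) ^ 2 - c * t ^ 2) ^ 2) ∧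
    (Cbeta β < a ^ 2 →
      ∃ γ : ℝ, 0 < γ ∧ ∃ c₁ : ℝ, 0 < c₁ ∧ ∃ c₂ : ℝ, 0 < c₂ ∧ c₁ ≠ c₂ ∧
        ∀ (x : Fin m → ℝ) (t : ℝ),
          fQuartic m a β x t
            = γ * ((∑ i, x i ^ 2) ^ 2 - c₁ * t ^ 2)
                * ((∑ i, x i ^ 2) ^ 2 - c₂ * t ^ 2)) := by
  have hb1 : (0:ℝ) < β + 1 := by
    rcases hβ with h | h
    · linarith [h.1]
    · simp only [Set.mem_Ioi] at h; linarith
  have hb2 : (0:ℝ) < β + 2 := by linarith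
  have ha2 : 0 < a ^ 2 := by positivity
  set S := Real.sqrt ((2 * β + 5) ^ 2 - 9) with hSdef
  have hS2 : S ^ 2 = (2 * β + 5) ^ 2 - 9 := Real.sq_sqrt (by nlinarith)
  have hS0 : 0 ≤ S := Real.sqrt_nonneg _
  have hSpos : 0 < S := Real.sqrt_pos.mpr (by nlinarith)
  have hSgt : 2 * β + 2 < S := by nlinarith
  have hCeq : Cbeta β = ((β + 2) / 2) * (2 * β + 5 + S) := rfl
  refine ⟨?_, ?_, ?_⟩
  · -- (i)
    intro hlt x t hxt
    have hs0 : (0:ℝ) ≤ ∑ i, x i ^ 2 := Finset.sum_nonneg fun i _ => sq_nonneg _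
    rw [hCeq] at hlt
    show 0 < 2 * (β + 1) * (∑ i, x i ^ 2) ^ 4
      + (3 * (β + 2) - 2 * a ^ 2) * (∑ i, x i ^ 2) ^ 2 * t ^ 2
      + (β + 2) * a ^ 2 * t ^ 4
    have hspos : x ≠ 0 → 0 < ∑ i, x i ^ 2 := by
      intro hx
      obtain ⟨i, hi⟩ := Function.ne_iff.mp hx
      have hi' : x i ≠ 0 := by simpa using hi
      have h1 : x i ^ 2 ≤ ∑ j, x j ^ 2 :=
        Finset.single_le_sum (fun j _ => sq_nonneg (x j)) (Finset.mem_univ i)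
      have h2 : 0 < x i ^ 2 := lt_of_le_of_ne (sq_nonneg _) (Ne.symm (pow_ne_zero 2 hi'))
      linarith
    rcases le_or_gt (2 * a ^ 2) (3 * (β + 2)) with hB | hB
    · rcases hxt with hx | ht
      · have := hspos hx
        nlinarith [sq_nonneg t, mul_nonneg (mul_nonneg (by linarith : (0:ℝ) ≤ 3*(β+2)-2*a^2) (sq_nonneg (∑ i, x i ^ 2))) (sq_nonneg t), pow_pos this 4, mul_nonneg (mul_nonneg hb2.le ha2.le) (pow_nonneg (sq_nonneg t) 2)]
      · have ht2 : 0 < t ^ 2 := by positivity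
        nlinarith [mul_nonneg (mul_nonneg (by linarith : (0:ℝ) ≤ 3*(β+2)-2*a^2) (sq_nonneg (∑ i, x i ^ 2))) (sq_nonneg t), mul_nonneg (mul_nonneg (by linarith : (0:ℝ) ≤ 2*(β+1)) (sq_nonneg (∑ i, x i^2))) (sq_nonneg (∑ i, x i^2)), mul_pos (mul_pos hb2 ha2) (mul_pos ht2 ht2)]
    · have hD : ((β + 2) / 2) * (2 * β + 5 - S) < a ^ 2 := by nlinarith
      have hdisc : (3 * (β + 2) - 2 * a ^ 2) ^ 2 < 8 * (β + 1) * ((β + 2) * a ^ 2) := by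
        nlinarith [mul_pos (sub_pos.mpr hD) (sub_pos.mpr hlt)]
      rcases eq_or_ne t 0 with rfl | ht
      · have hx : x ≠ 0 := by tauto
        have := hspos hx
        have h4 : 0 < (∑ i, x i ^ 2) ^ 4 := by positivity
        nlinarith
      · have ht2 : 0 < t ^ 2 := by positivity
        nlinarith [sq_nonneg (4 * (β + 1) * (∑ i, x i ^ 2) ^ 2 + (3 * (β + 2) - 2 * a ^ 2) * t ^ 2), mul_pos (sub_pos.mpr hdisc) (mul_pos ht2 ht2)]
  · -- (ii)
    intro heq
    rw [hCeq] at heq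
    have hΔ : (2 * a ^ 2 - 3 * (β + 2)) ^ 2 = 8 * (β + 1) * ((β + 2) * a ^ 2) := by
      linear_combination (4 * (a ^ 2 - ((β + 2) / 2) * (2 * β + 5 - S))) * heq
        + ((β + 2) ^ 2) * hS2
    have hK : 0 < 2 * a ^ 2 - 3 * (β + 2) := by nlinarith
    set c : ℝ := (2 * a ^ 2 - 3 * (β + 2)) / (4 * (β + 1)) with hc
    have e : 4 * (β + 1) * c = 2 * a ^ 2 - 3 * (β + 2) := by
      rw [hc]; field_simp
    have hc2 : 2 * (β + 1) * c ^ 2 = (β + 2) * a ^ 2 :=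
      mul_left_cancel₀ (show (8 * (β + 1) : ℝ) ≠ 0 by positivity)
        (by linear_combination (4 * (β + 1) * c + (2 * a ^ 2 - 3 * (β + 2))) * e + hΔ)
    refine ⟨2 * (β + 1), by linarith, c, by rw [hc]; exact div_pos hK (by positivity), ?_⟩
    intro x t
    show 2 * (β + 1) * (∑ i, x i ^ 2) ^ 4
      + (3 * (β + 2) - 2 * a ^ 2) * (∑ i, x i ^ 2) ^ 2 * t ^ 2
      + (β + 2) * a ^ 2 * t ^ 4 = _
    linear_combination ((∑ i, x i ^ 2) ^ 2 * t ^ 2) * e - t ^ 4 * hc2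
  · -- (iii)
    intro hgt
    rw [hCeq] at hgt
    have hK : 0 < 2 * a ^ 2 - 3 * (β + 2) := by nlinarith
    set T := Real.sqrt ((2 * a ^ 2 - 3 * (β + 2)) ^ 2 - 8 * (β + 1) * ((β + 2) * a ^ 2)) with hTdef
    have hΔpos : 0 < (2 * a ^ 2 - 3 * (β + 2)) ^ 2 - 8 * (β + 1) * ((β + 2) * a ^ 2) := by
      have hD : ((β + 2) / 2) * (2 * β + 5 - S) < a ^ 2 := by nlinarith
      nlinarith [mul_pos (sub_pos.mpr hD) (sub_pos.mpr hgt)]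
    have hT2 : T ^ 2 = (2 * a ^ 2 - 3 * (β + 2)) ^ 2 - 8 * (β + 1) * ((β + 2) * a ^ 2) :=
      Real.sq_sqrt hΔpos.le
    have hT0 : 0 < T := Real.sqrt_pos.mpr hΔpos
    have hTlt : T < 2 * a ^ 2 - 3 * (β + 2) := by
      nlinarith [mul_pos (mul_pos hb1 hb2) ha2, hT0, hK]
    set c₁ : ℝ := (2 * a ^ 2 - 3 * (β + 2) + T) / (4 * (β + 1)) with hc1
    set c₂ : ℝ := (2 * a ^ 2 - 3 * (β + 2) - T) / (4 * (β + 1)) with hc2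
    have e1 : 4 * (β + 1) * c₁ = 2 * a ^ 2 - 3 * (β + 2) + T := by rw [hc1]; field_simp
    have e2 : 4 * (β + 1) * c₂ = 2 * a ^ 2 - 3 * (β + 2) - T := by rw [hc2]; field_simp
    have hsum : 2 * (β + 1) * (c₁ + c₂) = 2 * a ^ 2 - 3 * (β + 2) := by
      linear_combination (1/2) * e1 + (1/2) * e2
    have hprod : 2 * (β + 1) * (c₁ * c₂) = (β + 2) * a ^ 2 := by
      have h16 : 16 * (β + 1) ^ 2 * (c₁ * c₂)
          = (2 * a ^ 2 - 3 * (β + 2)) ^ 2 - T ^ 2 := by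
        linear_combination (4 * (β + 1) * c₂) * e1
          + (2 * a ^ 2 - 3 * (β + 2) + T) * e2
      exact mul_left_cancel₀ (show (8 * (β + 1) : ℝ) ≠ 0 by positivity)
        (by linear_combination h16 - hT2)
    refine ⟨2 * (β + 1), by linarith,
      c₁, by rw [hc1]; exact div_pos (by linarith) (by positivity),
      c₂, by rw [hc2]; exact div_pos (by linarith) (by positivity), ?_, ?_⟩
    · intro h
      rw [hc1, hc2, div_eq_div_iff (by positivity) (by positivity)] at h
      nlinarith [mul_pos hb1 hT0, h]
    · intro x t
      show 2 * (β + 1) * (∑ i, x i ^ 2) ^ 4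
        + (3 * (β + 2) - 2 * a ^ 2) * (∑ i, x i ^ 2) ^ 2 * t ^ 2
        + (β + 2) * a ^ 2 * t ^ 4 = _
      linear_combination ((∑ i, x i ^ 2) ^ 2 * t ^ 2) * hsum - t ^ 4 * hprod
end
end
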